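/- arXiv:1101.3045 — 3 statements merged into one kernel-verified Lean document; each statement's English description precedes it below -/
import Mathlib

section
/- Let k be a field of characteristic p > 0 and K a separably generated function field over k (i.e. K is finite separable over k(t) for some t ∈ K). Then for every n > 0, K ∩ k̄K^{p^n} = kK^{p^n}, where k̄ is an algebraic closure of k and the intersection is taken inside k̄K = the compositum. -/
open IntermediateField Polynomial

lemma aux_not_pow {F Ω : Type*} [Field F] [Field Ω] [Algebra F Ω]
    {p : ℕ} (hp : 2 ≤ p) {x : Ω} (hx : Transcendental F x)
    {e : Ω} (he : e ∈ adjoin F {x}) (hep : e ^ p = x) : False := by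
  obtain ⟨r, s, rfl⟩ := (mem_adjoin_simple_iff F _).1 he
  by_cases hs : aeval x s = 0
  · rw [hs, div_zero, zero_pow (by omega)] at hep
    exact hx (hep ▸ isAlgebraic_zero)
  have hs0 : s ≠ 0 := fun h => hs (by simp [h])
  rw [div_pow, div_eq_iff (pow_ne_zero _ hs), ← map_pow, ← map_pow] at hep
  have h0 : aeval x (r ^ p - X * s ^ p) = 0 := by simp [hep, mul_comm]
  have hpoly : r ^ p - X * s ^ p = 0 := by
    by_contra h
    exact hx ⟨_, h, h0⟩
  have hr0 : r ≠ 0 := by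
    rintro rfl
    apply hs0
    have h2 := sub_eq_zero.mp hpoly
    have h3 : X * s ^ p = 0 := by rw [← h2]; simp [zero_pow (show p ≠ 0 by omega)]
    rcases mul_eq_zero.mp h3 with h4 | h4
    · exact absurd h4 X_ne_zero
    · exact pow_eq_zero_iff (show p ≠ 0 by omega) |>.mp h4
  have heq : r ^ p = X * s ^ p := sub_eq_zero.mp hpoly
  have hdeg : (r ^ p).natDegree = (X * s ^ p).natDegree := by rw [heq]
  rw [natDegree_pow, natDegree_mul X_ne_zero (pow_ne_zero _ hs0), natDegree_pow,
    natDegree_X] at hdeg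
  have : p ∣ 1 := (Nat.dvd_add_right ⟨s.natDegree, rfl⟩).mp ⟨r.natDegree, by omega⟩
  exact absurd (Nat.le_of_dvd one_pos this) (by omega)

lemma crux {k K Ω : Type*} [Field k] [Field K] [Algebra k K] [Field Ω] [Algebra K Ω]
    [Algebra k Ω] [IsScalarTower k K Ω] (p : ℕ) [Fact p.Prime] [CharP Ω p]
    (t : K) (ht : Transcendental k t)
    (hsep : Algebra.IsSeparable ↥(IntermediateField.adjoin k {t}) K)
    (e : Ω) (he : e ∈ Subfield.closure ({x : Ω | IsAlgebraic k x} ∪ Set.range (algebraMap K Ω)))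
    (hep : e ^ p = algebraMap K Ω t) : False := by
  have hp2 : 2 ≤ p := (Fact.out : p.Prime).two_le
  set φ := algebraMap K Ω with hφ
  set T := φ t with hTdef
  -- the algebraic closure of k in Ω as an intermediate field
  have halg : (integralClosure k Ω).IsAlgebraic := fun x hx => isAlgebraic_iff_isIntegral.2 hx
  set κI := halg.toIntermediateField with hκI
  have hmemκ : ∀ x : Ω, IsAlgebraic k x → x ∈ κI := fun x hx => hx.isIntegral
  -- T is transcendental over k and over κI
  have hTk : Transcendental k T := by
    rintro ⟨q, hq, hq0⟩
    refine ht ⟨q, hq, ?_⟩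
    have h1 : φ (aeval t q) = 0 := by
      rw [← Polynomial.aeval_algebraMap_apply, ← hTdef, hq0]
    exact (_root_.map_eq_zero φ).mp h1
  have hTκ : Transcendental ↥κI T := by
    intro hTalg
    haveI : Algebra.IsIntegral k ↥κI := ⟨fun z => IntermediateField.coe_isIntegral_iff.mp z.2⟩
    exact hTk (isIntegral_trans T hTalg.isIntegral).isAlgebraic
  -- M := κI(T)
  set MI := IntermediateField.adjoin ↥κI {T} with hMI
  have hTMI : T ∈ MI := mem_adjoin_simple_self _ T
  -- the image of k(t) lands in MI
  have himg : ∀ z ∈ (IntermediateField.adjoin k {t}), φ z ∈ MI := by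
    intro z hz
    have h1 : φ z ∈ (IntermediateField.adjoin k {t}).toSubfield.map φ := ⟨z, hz, rfl⟩
    rw [IntermediateField.adjoin_toSubfield, RingHom.map_field_closure] at h1
    refine (Subfield.closure_le (t := MI.toSubfield)).mpr ?_ h1
    rw [Set.image_union, Set.image_singleton]
    rintro w (⟨_, ⟨c, rfl⟩, rfl⟩ | hw)
    · have hca : IsAlgebraic k (algebraMap k Ω c) := isAlgebraic_algebraMap c
      have h2 : algebraMap ↥κI Ω ⟨algebraMap k Ω c, hmemκ _ hca⟩ ∈ MI := MI.algebraMap_mem _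
      rwa [show algebraMap ↥κI Ω ⟨algebraMap k Ω c, hmemκ _ hca⟩ = algebraMap k Ω c from rfl,
        IsScalarTower.algebraMap_apply k K Ω] at h2
    · rw [Set.mem_singleton_iff.mp hw]
      exact hTMI
  -- the ring hom from k(t) to MI
  set ψ : ↥(IntermediateField.adjoin k {t}) →+* ↥MI :=
    { toFun := fun z => ⟨φ z.1, himg z.1 z.2⟩
      map_one' := by ext; simp
      map_mul' := fun a b => by ext; simp
      map_zero' := by ext; simp
      map_add' := fun a b => by ext; simp } with hψ
  have hcomp : (algebraMap ↥MI Ω).comp ψ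
      = φ.comp (algebraMap ↥(IntermediateField.adjoin k {t}) K) := by
    ext z; rfl
  -- every element of the image of K is separable over MI
  have hsepel : ∀ y : K, IsSeparable ↥MI (φ y) := by
    intro y
    have h1 : IsSeparable ↥(IntermediateField.adjoin k {t}) y :=
      Algebra.IsSeparable.isSeparable _ y
    have hev : aeval (φ y) ((minpoly ↥(IntermediateField.adjoin k {t}) y).map ψ) = 0 := by
      rw [aeval_def, eval₂_map, hcomp, ← Polynomial.hom_eval₂, ← aeval_def, minpoly.aeval,
        map_zero]
    exact (Polynomial.Separable.map (f := ψ)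
      (h1 : (minpoly ↥(IntermediateField.adjoin k {t}) y).Separable)).of_dvd (minpoly.dvd _ _ hev)
  -- E := MI(range φ)
  set EI := IntermediateField.adjoin ↥MI (Set.range φ) with hEI
  haveI hsepEI : Algebra.IsSeparable ↥MI ↥EI := by
    rw [hEI, IntermediateField.isSeparable_adjoin_iff_isSeparable]
    rintro _ ⟨y, rfl⟩
    exact hsepel y
  have he' : e ∈ EI := by
    refine (Subfield.closure_le (t := EI.toSubfield)).mpr ?_ he
    rintro w (hw | hw)
    · have h2 : algebraMap ↥MI Ω ⟨w, MI.algebraMap_mem ⟨w, hmemκ w hw⟩⟩ ∈ EI :=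
        EI.algebraMap_mem _
      exact h2
    · exact IntermediateField.subset_adjoin _ _ hw
  -- e is separable over MI
  have hes : (minpoly ↥MI e).Separable := by
    have h2 : (minpoly ↥MI (⟨e, he'⟩ : ↥EI)).Separable :=
      Algebra.IsSeparable.isSeparable ↥MI (⟨e, he'⟩ : ↥EI)
    rwa [IntermediateField.minpoly_eq] at h2
  -- e is purely inseparable over MI
  set c₁ : ↥MI := ⟨T, hTMI⟩ with hc₁
  have hT₁ : algebraMap ↥MI Ω c₁ = T := rfl
  have haev : aeval e ((X : (↥MI)[X]) ^ p - C c₁) = 0 := by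
    rw [map_sub, map_pow, aeval_X, aeval_C, hT₁, hep, sub_self]
  have heint : IsIntegral ↥MI e :=
    ⟨X ^ p - C c₁, monic_X_pow_sub_C c₁ (by omega), haev⟩
  have hdvd : minpoly ↥MI e ∣ X ^ p - C c₁ := minpoly.dvd _ _ haev
  have hXp : ((X : Polynomial Ω) ^ p - C T) = (X - C e) ^ p := by
    rw [sub_pow_char, ← map_pow, hep]
  have hdvd2 : (minpoly ↥MI e).map (algebraMap ↥MI Ω) ∣ (X - C e) ^ p := by
    rw [← hXp]
    have := Polynomial.map_dvd (algebraMap ↥MI Ω) hdvd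
    rwa [Polynomial.map_sub, Polynomial.map_pow, Polynomial.map_X, Polynomial.map_C, hT₁] at this
  have hsq : Squarefree ((minpoly ↥MI e).map (algebraMap ↥MI Ω)) := (hes.map).squarefree
  have hdvd3 : (minpoly ↥MI e).map (algebraMap ↥MI Ω) ∣ X - C e :=
    (hsq.dvd_pow_iff_dvd (by omega)).mp hdvd2
  have hdeg1 : (minpoly ↥MI e).natDegree = 1 := by
    have hle : ((minpoly ↥MI e).map (algebraMap ↥MI Ω)).natDegree ≤ (X - C e).natDegree :=
      Polynomial.natDegree_le_of_dvd hdvd3 (X_sub_C_ne_zero e)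
    rw [natDegree_X_sub_C, Polynomial.natDegree_map] at hle
    exact le_antisymm hle (minpoly.natDegree_pos heint)
  have heMI : e ∈ MI := by
    obtain ⟨y, hy⟩ := minpoly.natDegree_eq_one_iff.mp hdeg1
    exact hy ▸ y.2
  exact aux_not_pow hp2 hTκ heMI hep

set_option maxHeartbeats 2000000 in
set_option synthInstance.maxHeartbeats 1000000 in
/-- `k` of characteristic `p > 0`, `K` a separably generated function field
over `k` (so `K` is finite separable over `k(t)` for some transcendental `t ∈ K`).  Inside
any algebraically closed field `Ω` containing `K` (so that `k̄K ⊆ Ω`, where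
`k̄ = {x ∈ Ω | x algebraic over k}`), one has `K ∩ k̄K^{p^n} = kK^{p^n}` for every
`n > 0`; composita are the subfields of `Ω` generated by the indicated subsets. -/
theorem stmt4 {k K : Type*} [Field k] [Field K] [Algebra k K]
    (p : ℕ) [Fact p.Prime] [CharP K p]
    (hsepgen : ∃ t : K, Transcendental k t ∧
      FiniteDimensional ↥(IntermediateField.adjoin k {t}) K ∧
      Algebra.IsSeparable ↥(IntermediateField.adjoin k {t}) K)
    (n : ℕ) (hn : 0 < n)
    (Ω : Type*) [Field Ω] [Algebra K Ω] [Algebra k Ω] [IsScalarTower k K Ω]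
    [IsAlgClosed Ω] :
    (algebraMap K Ω).fieldRange ⊓
      Subfield.closure
        ({x : Ω | IsAlgebraic k x} ∪ {y : Ω | ∃ x : K, algebraMap K Ω (x ^ p ^ n) = y})
    = Subfield.closure
        (Set.range (algebraMap k Ω) ∪
          {y : Ω | ∃ x : K, algebraMap K Ω (x ^ p ^ n) = y}) := by
  obtain ⟨t, ht, hfd, hsep⟩ := hsepgen
  have hp2 : 2 ≤ p := (Fact.out : p.Prime).two_le
  haveI hΩchar : CharP Ω p := charP_of_injective_ringHom (algebraMap K Ω).injective p
  haveI : ExpChar Ω p := ExpChar.prime Fact.out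
  set φ := algebraMap K Ω with hφ
  set T := φ t with hTdef
  set A : Set Ω := {x | IsAlgebraic k x} with hA
  set P : Set Ω := {y | ∃ x : K, φ (x ^ p ^ n) = y} with hP
  set E := Subfield.closure (A ∪ Set.range φ) with hE
  set Fr := iterateFrobenius Ω p n with hFr
  set Fs := E.map Fr with hFs
  -- the closure of A ∪ P is Fs
  have hclosure : Subfield.closure (A ∪ P) = Fs := by
    rw [hFs, hE, RingHom.map_field_closure, Set.image_union]
    have h1 : Fr '' A = A := by
      apply Set.Subset.antisymm
      · rintro _ ⟨x, hx, rfl⟩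
        show IsAlgebraic k (Fr x)
        rw [hFr, iterateFrobenius_def]
        exact isAlgebraic_iff_isIntegral.mpr ((isAlgebraic_iff_isIntegral.mp hx).pow _)
      · intro x hx
        obtain ⟨z, hz⟩ := IsAlgClosed.exists_pow_nat_eq x (n := p ^ n)
          (pow_pos (by omega : 0 < p) n)
        refine ⟨z, ?_, by rw [hFr, iterateFrobenius_def, hz]⟩
        show IsAlgebraic k z
        exact isAlgebraic_iff_isIntegral.mpr
          (IsIntegral.of_pow (pow_pos (by omega : 0 < p) n)
            (hz ▸ isAlgebraic_iff_isIntegral.mp hx))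
    have h2 : Fr '' Set.range φ = P := by
      ext z
      constructor
      · rintro ⟨_, ⟨y, rfl⟩, rfl⟩
        exact ⟨y, by rw [map_pow, hFr, iterateFrobenius_def]⟩
      · rintro ⟨y, rfl⟩
        exact ⟨φ y, ⟨y, rfl⟩, by rw [hFr, iterateFrobenius_def, ← map_pow]⟩
    rw [h1, h2]
  set R := Subfield.closure (Set.range (algebraMap k Ω) ∪ P) with hR
  rw [hclosure]
  -- easy inclusions
  have hRKf : R ≤ φ.fieldRange := by
    rw [hR]
    apply Subfield.closure_le.mpr
    apply Set.union_subset
    · rintro _ ⟨c, rfl⟩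
      exact ⟨algebraMap k K c, (IsScalarTower.algebraMap_apply k K Ω c).symm⟩
    · rintro _ ⟨x, rfl⟩
      exact ⟨x ^ p ^ n, rfl⟩
  have hRFs : R ≤ Fs := by
    rw [← hclosure, hR]
    apply Subfield.closure_mono
    apply Set.union_subset_union_left
    rintro _ ⟨c, rfl⟩
    exact isAlgebraic_algebraMap c
  apply le_antisymm
  swap
  · exact le_inf hRKf hRFs
  -- hard direction
  intro x hx
  rw [Subfield.mem_inf] at hx
  obtain ⟨hx1, hx2⟩ := hx
  obtain ⟨y, rfl⟩ := RingHom.mem_fieldRange.mp hx1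
  -- T ^ p ^ n ∈ R, T integral over R
  have hTpR : T ^ p ^ n ∈ R := Subfield.subset_closure (Or.inr ⟨t, by rw [map_pow]⟩)
  set c₀ : ↥R := ⟨T ^ p ^ n, hTpR⟩ with hc₀
  have haevT : aeval T ((X : Polynomial ↥R) ^ p ^ n - C c₀) = 0 := by
    rw [map_sub, map_pow, aeval_X, aeval_C, show algebraMap ↥R Ω c₀ = T ^ p ^ n from rfl,
      sub_self]
  have hTint : IsIntegral ↥R T :=
    ⟨X ^ p ^ n - C c₀, monic_X_pow_sub_C c₀ (by positivity), haevT⟩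
  -- spanning : every element of the image of K lies in R(T)
  haveI : CharP ↥(IntermediateField.adjoin k {t}) p :=
    RingHom.charP _ (algebraMap ↥(IntermediateField.adjoin k {t}) K).injective p
  haveI : ExpChar ↥(IntermediateField.adjoin k {t}) p := ExpChar.prime Fact.out
  have hspan : ∀ w : K, φ w ∈ IntermediateField.adjoin ↥R {T} := by
    intro w
    have h1 := IntermediateField.adjoin_eq_adjoin_pow_expChar_pow_of_isSeparable'
      ↥(IntermediateField.adjoin k {t}) K Set.univ p n
    have h2 : w ∈ IntermediateField.adjoin ↥(IntermediateField.adjoin k {t})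
        ((fun x => x ^ p ^ n) '' Set.univ) := by
      rw [← h1]
      exact IntermediateField.subset_adjoin _ _ (Set.mem_univ w)
    rw [← IntermediateField.mem_toSubfield, IntermediateField.adjoin_toSubfield] at h2
    have h3 : φ w ∈ (Subfield.closure
        (Set.range (algebraMap ↥(IntermediateField.adjoin k {t}) K)
          ∪ (fun x => x ^ p ^ n) '' Set.univ)).map φ := ⟨w, h2, rfl⟩
    rw [RingHom.map_field_closure, Set.image_union] at h3
    refine (Subfield.closure_le
      (t := (IntermediateField.adjoin ↥R {T}).toSubfield)).mpr ?_ h3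
    apply Set.union_subset
    · rintro _ ⟨_, ⟨z, rfl⟩, rfl⟩
      have hz : (z : K) ∈ IntermediateField.adjoin k {t} := z.2
      have h4 : φ z ∈ (IntermediateField.adjoin k {t}).toSubfield.map φ := ⟨z, hz, rfl⟩
      rw [IntermediateField.adjoin_toSubfield, RingHom.map_field_closure, Set.image_union,
        Set.image_singleton] at h4
      refine (Subfield.closure_le
        (t := (IntermediateField.adjoin ↥R {T}).toSubfield)).mpr ?_ h4
      apply Set.union_subset
      · rintro _ ⟨_, ⟨c, rfl⟩, rfl⟩
        have hc : algebraMap k Ω c ∈ R := Subfield.subset_closure (Or.inl ⟨c, rfl⟩)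
        have h5 : algebraMap ↥R Ω ⟨_, hc⟩ ∈ IntermediateField.adjoin ↥R {T} :=
          IntermediateField.algebraMap_mem _ _
        rwa [show algebraMap ↥R Ω ⟨_, hc⟩ = algebraMap k Ω c from rfl,
          IsScalarTower.algebraMap_apply k K Ω] at h5
      · rintro v hv
        rw [Set.mem_singleton_iff.mp hv]
        exact IntermediateField.mem_adjoin_simple_self _ T
    · rintro _ ⟨_, ⟨z, -, rfl⟩, rfl⟩
      have hc : φ (z ^ p ^ n) ∈ R := Subfield.subset_closure (Or.inr ⟨z, rfl⟩)
      exact IntermediateField.algebraMap_mem (IntermediateField.adjoin ↥R {T}) ⟨_, hc⟩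
  -- T is purely inseparable of exact degree p ^ n over Fs
  have hTE : T ∈ E := Subfield.subset_closure (Or.inr ⟨t, rfl⟩)
  have hTpFs : T ^ p ^ n ∈ Fs := ⟨T, hTE, by rw [hFr, iterateFrobenius_def]⟩
  set c₁ : ↥Fs := ⟨T ^ p ^ n, hTpFs⟩ with hc₁
  have haevT2 : aeval T ((X : Polynomial ↥Fs) ^ p ^ n - C c₁) = 0 := by
    rw [map_sub, map_pow, aeval_X, aeval_C, show algebraMap ↥Fs Ω c₁ = T ^ p ^ n from rfl,
      sub_self]
  have hTintFs : IsIntegral ↥Fs T :=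
    ⟨X ^ p ^ n - C c₁, monic_X_pow_sub_C c₁ (by positivity), haevT2⟩
  haveI : CharP ↥Fs p := RingHom.charP _ (algebraMap ↥Fs Ω).injective p
  haveI : ExpChar ↥Fs p := ExpChar.prime Fact.out
  haveI hPI : IsPurelyInseparable ↥Fs ↥(IntermediateField.adjoin ↥Fs {T}) := by
    rw [IntermediateField.isPurelyInseparable_adjoin_simple_iff_pow_mem ↥Fs Ω p]
    exact ⟨n, ⟨c₁, rfl⟩⟩
  obtain ⟨m, y₁, hm⟩ := IsPurelyInseparable.minpoly_eq_X_pow_sub_C ↥Fs p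
    (⟨T, IntermediateField.mem_adjoin_simple_self _ T⟩ : ↥(IntermediateField.adjoin ↥Fs {T}))
  have hminT : minpoly ↥Fs T = X ^ p ^ m - C y₁ :=
    (IntermediateField.minpoly_eq _).symm.trans hm
  -- T ^ p ^ (n-1) ∉ Fs via crux
  have hT2 : T ^ p ^ (n - 1) ∉ Fs := by
    rintro ⟨e, heE, heq⟩
    have h6 : (e ^ p) ^ p ^ (n - 1) = T ^ p ^ (n - 1) := by
      rw [← pow_mul, ← pow_succ']
      rw [show n - 1 + 1 = n by omega, ← iterateFrobenius_def (p := p) (n := n)]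
      exact heq
    have h7 : e ^ p = T := by
      have hinj := (frobenius_inj Ω p).iterate (n - 1)
      apply hinj
      rwa [iterate_frobenius, iterate_frobenius]
    exact crux p t ht hsep e heE h7
  -- m = n
  have hdegFs : (minpoly ↥Fs T).natDegree = p ^ n := by
    have hdv : minpoly ↥Fs T ∣ X ^ p ^ n - C c₁ := minpoly.dvd _ _ haevT2
    have hle : p ^ m ≤ p ^ n := by
      have := Polynomial.natDegree_le_of_dvd hdv
        (X_pow_sub_C_ne_zero (pow_pos (by omega : 0 < p) n) c₁)
      rwa [hminT, natDegree_X_pow_sub_C, natDegree_X_pow_sub_C] at this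
    have hmlen : m ≤ n := by
      by_contra hcon
      have := pow_lt_pow_right₀ (show 1 < p by omega) (show n < m by omega)
      omega
    have hmeqn : m = n := by
      by_contra hcon
      have hmlt : m < n := by omega
      have h9 : T ^ p ^ m ∈ Fs := by
        have h10 := minpoly.aeval ↥Fs T
        rw [hminT, map_sub, map_pow, aeval_X, aeval_C] at h10
        have h11 : T ^ p ^ m = algebraMap ↥Fs Ω y₁ := by
          have := sub_eq_zero.mp h10
          exact this
        rw [h11]
        exact y₁.2
      have h12 : T ^ p ^ (n - 1) ∈ Fs := by
        have h13 : T ^ p ^ (n - 1) = (T ^ p ^ m) ^ p ^ (n - 1 - m) := by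
          rw [← pow_mul, ← pow_add, show m + (n - 1 - m) = n - 1 by omega]
        rw [h13]
        exact Subfield.pow_mem _ h9 _
      exact hT2 h12
    rw [hminT, natDegree_X_pow_sub_C, hmeqn]
  -- inclusion hom from R to Fs
  set ι : ↥R →+* ↥Fs :=
    { toFun := fun z => ⟨z.1, hRFs z.2⟩
      map_one' := rfl
      map_mul' := fun a b => rfl
      map_zero' := rfl
      map_add' := fun a b => rfl } with hι
  have hcomp2 : (algebraMap ↥Fs Ω).comp ι = algebraMap ↥R Ω := rfl
  -- degree of minpoly over R is also p ^ n
  have hdegR : (minpoly ↥R T).natDegree = p ^ n := by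
    apply le_antisymm
    · have := Polynomial.natDegree_le_of_dvd (minpoly.dvd _ _ haevT)
        (X_pow_sub_C_ne_zero (pow_pos (by omega : 0 < p) n) c₀)
      rwa [natDegree_X_pow_sub_C] at this
    · have hev2 : aeval T ((minpoly ↥R T).map ι) = 0 := by
        rw [aeval_def, eval₂_map, hcomp2, ← aeval_def, minpoly.aeval]
      have hdvd4 := minpoly.dvd ↥Fs T hev2
      have h14 := Polynomial.natDegree_le_of_dvd hdvd4
        (((minpoly.monic hTint).map ι).ne_zero)
      rwa [hdegFs, natDegree_map] at h14
  -- power basis argument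
  set pb := IntermediateField.adjoin.powerBasis hTint with hpb
  obtain ⟨f, hfdeg, hfeq⟩ := pb.exists_eq_aeval
    (⟨φ y, hspan y⟩ : ↥(IntermediateField.adjoin ↥R {T}))
  have hgenT : algebraMap ↥(IntermediateField.adjoin ↥R {T}) Ω pb.gen = T :=
    IntermediateField.AdjoinSimple.algebraMap_gen ↥R T
  have hx3 : φ y = aeval T f := by
    have h15 := congrArg (algebraMap ↥(IntermediateField.adjoin ↥R {T}) Ω) hfeq
    rwa [← Polynomial.aeval_algebraMap_apply, hgenT,
      show algebraMap ↥(IntermediateField.adjoin ↥R {T}) Ω ⟨φ y, hspan y⟩ = φ y from rfl]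
      at h15
  set xel : ↥Fs := ⟨φ y, hx2⟩ with hxel
  set g : Polynomial ↥Fs := f.map ι - C xel with hg
  have hg0 : aeval T g = 0 := by
    rw [hg, map_sub, aeval_C, show aeval T (f.map ι) = aeval T f by
      rw [aeval_def, eval₂_map, hcomp2, ← aeval_def], ← hx3,
      show algebraMap ↥Fs Ω xel = φ y from rfl, sub_self]
  have hgz : g = 0 := by
    by_contra hgne
    have h16 := Polynomial.natDegree_le_of_dvd (minpoly.dvd _ _ hg0) hgne
    have h17 : g.natDegree < p ^ n := by
      have h18 : g.natDegree ≤ max (f.map ι).natDegree (C xel).natDegree :=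
        Polynomial.natDegree_sub_le _ _
      rw [natDegree_map, natDegree_C] at h18
      have h19 : f.natDegree < p ^ n := by
        have := hfdeg
        rwa [show pb.dim = (minpoly ↥R T).natDegree from rfl, hdegR] at this
      omega
    rw [hdegFs] at h16
    omega
  have h20 : ι (f.coeff 0) = xel := by
    have h21 : f.map ι = C xel := sub_eq_zero.mp hgz
    have := congrArg (fun q => Polynomial.coeff q 0) h21
    simpa [Polynomial.coeff_map] using this
  have h22 : φ y = (f.coeff 0).1 := by
    have := congrArg Subtype.val h20
    exact this.symm
  rw [h22]
  exact (f.coeff 0).2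
end

section
/- Let k be a field of characteristic p > 0 and K a separably generated function field over k, and let k^sep be the separable closure of k. Then for every n > 0, K ∩ k^sep K^{p^n} = kK^{p^n}. -/
open Polynomial in
private lemma sep_pow_mem_aux {F E : Type*} [Field F] [Field E] [Algebra F E]
    (q : ℕ) [ExpChar F q] (x : E) (hsep : IsSeparable F x)
    (hx : ∃ m : ℕ, x ^ q ^ m ∈ (algebraMap F E).range) :
    x ∈ (algebraMap F E).range := by
  have hint : IsIntegral F x := hsep.isIntegral
  have h1 : (minpoly F x).natSepDegree = 1 :=
    (minpoly.natSepDegree_eq_one_iff_pow_mem q).2 hx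
  have h2 : (minpoly F x).natDegree = 1 := by
    rw [← Polynomial.Separable.natSepDegree_eq_natDegree hsep]; exact h1
  rw [← minpoly.degree_eq_one_iff]
  exact_mod_cast (Polynomial.degree_eq_iff_natDegree_eq (minpoly.ne_zero hint)).2 h2

/-- `k` of characteristic `p > 0`, `K` a separably generated function field
over `k`, `k^sep` the separable closure of `k` (realized inside an algebraically closed
field `Ω ⊇ K` as the set of elements that are algebraic and separable over `k`).  Then for
every `n > 0`, `K ∩ k^sep K^{p^n} = kK^{p^n}` inside `Ω`. -/
theorem stmt5 {k K : Type*} [Field k] [Field K] [Algebra k K]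
    (p : ℕ) [Fact p.Prime] [CharP K p]
    (hsepgen : ∃ t : K, Transcendental k t ∧
      FiniteDimensional ↥(IntermediateField.adjoin k {t}) K ∧
      Algebra.IsSeparable ↥(IntermediateField.adjoin k {t}) K)
    (n : ℕ) (hn : 0 < n)
    (Ω : Type*) [Field Ω] [Algebra K Ω] [Algebra k Ω] [IsScalarTower k K Ω]
    [IsAlgClosed Ω] :
    (algebraMap K Ω).fieldRange ⊓
      Subfield.closure
        ({x : Ω | IsIntegral k x ∧ (minpoly k x).Separable} ∪
          {y : Ω | ∃ x : K, algebraMap K Ω (x ^ p ^ n) = y})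
    = Subfield.closure
        (Set.range (algebraMap k Ω) ∪
          {y : Ω | ∃ x : K, algebraMap K Ω (x ^ p ^ n) = y}) := by
  haveI : CharP Ω p := charP_of_injective_algebraMap (algebraMap K Ω).injective p
  set P : Set Ω := {y : Ω | ∃ x : K, algebraMap K Ω (x ^ p ^ n) = y} with hPdef
  set S : Set Ω := {x : Ω | IsIntegral k x ∧ (minpoly k x).Separable} with hSdef
  set F : Subfield Ω := Subfield.closure (Set.range (algebraMap k Ω) ∪ P) with hFdef
  have halg : ∀ x : k, algebraMap k Ω x ∈ F := fun x =>
    Subfield.subset_closure (Or.inl ⟨x, rfl⟩)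
  let F' : IntermediateField k Ω := F.toIntermediateField halg
  haveI : CharP ↥F' p := (algebraMap ↥F' Ω).charP Subtype.val_injective p
  haveI : ExpChar ↥F' p := ExpChar.prime Fact.out
  apply le_antisymm
  · rintro x ⟨⟨a, rfl⟩, hx2⟩
    -- x = algebraMap K Ω a lies in closure (S ∪ P); show it lies in F
    have hxsep : IsSeparable ↥F' (algebraMap K Ω a) := by
      rw [← mem_separableClosure_iff]
      have hle : Subfield.closure (S ∪ P) ≤ (separableClosure ↥F' Ω).toSubfield := by
        apply Subfield.closure_le.2
        rintro y (hy | hy)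
        · exact mem_separableClosure_iff.2 (IsSeparable.tower_top _ hy.2)
        · have hyF : y ∈ F := Subfield.subset_closure (Or.inr hy)
          exact (separableClosure ↥F' Ω).algebraMap_mem ⟨y, hyF⟩
      exact hle hx2
    have hpow : ∃ m : ℕ, (algebraMap K Ω a) ^ p ^ m ∈ (algebraMap ↥F' Ω).range := by
      refine ⟨n, ⟨algebraMap K Ω (a ^ p ^ n), Subfield.subset_closure (Or.inr ⟨a, rfl⟩)⟩, ?_⟩
      simp [map_pow]
    obtain ⟨⟨y, hy⟩, hxy⟩ := sep_pow_mem_aux p _ hxsep hpow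
    rw [← hxy]
    exact hy
  · refine le_inf ?_ ?_
    · apply Subfield.closure_le.2
      rintro x (⟨c, rfl⟩ | ⟨a, rfl⟩)
      · exact ⟨algebraMap k K c, (IsScalarTower.algebraMap_apply k K Ω c).symm⟩
      · exact ⟨a ^ p ^ n, rfl⟩
    · apply Subfield.closure_le.2
      rintro x (⟨c, rfl⟩ | hx)
      · refine Subfield.subset_closure (Or.inl ⟨isIntegral_algebraMap, ?_⟩)
        rw [minpoly.eq_X_sub_C]
        exact Polynomial.separable_X_sub_C
      · exact Subfield.subset_closure (Or.inr hx)
end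

section
/- Let K = 𝔽_p(t) and Γ = ⟨t, −t, 1−t⟩ ⊆ K*. In the product ∏_{v∈Ω} K_v* over a cofinite set Ω of places at which t, −t, 1−t are units, the sequence (t^{p^{n!}})_{n≥1} converges to an element α of the closure of Γ that does not lie in K*; consequently (α, −α) satisfies X₁ + X₂ = 0 with coordinates in Γ̄ but there is no solution of X₁ + X₂ = 0 with both coordinates in Γ. -/
/-- A place of a function field `K/k`: a normalized discrete (additive) valuation on `K`
trivial on `k`. -/
structure FnPlace (k K : Type*) [Field k] [Field K] [Algebra k K] where
  v : K → ℤ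
  v_mul : ∀ {x y : K}, x ≠ 0 → y ≠ 0 → v (x * y) = v x + v y
  v_add : ∀ {x y : K}, x ≠ 0 → y ≠ 0 → x + y ≠ 0 → min (v x) (v y) ≤ v (x + y)
  exists_uniformizer : ∃ s : K, s ≠ 0 ∧ v s = 1
  v_const : ∀ c : k, c ≠ 0 → v (algebraMap k K c) = 0

open Polynomial UniqueFactorizationMonoid

set_option linter.unusedSectionVars false
noncomputable section
namespace Stmt16Aux

variable {F : Type*} [Field F] [DecidableEq F]

/-- multiplicity of monic irreducible `π` in polynomial `f` -/
def cnt (π f : F[X]) : ℕ := (normalizedFactors f).count π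

variable {π : F[X]} (hπ : Irreducible π) (hm : π.Monic)
set_option linter.unusedSectionVars false
include hπ hm

theorem pow_dvd_iff_le_cnt {f : F[X]} (hf : f ≠ 0) {k : ℕ} : π ^ k ∣ f ↔ k ≤ cnt π f := by
  classical
  rw [pow_dvd_iff_le_emultiplicity, emultiplicity_eq_count_normalizedFactors hπ hf,
    hm.normalize_eq_self, cnt]
  · exact_mod_cast Nat.cast_le
theorem dvd_iff_one_le_cnt {f : F[X]} (hf : f ≠ 0) : π ∣ f ↔ 1 ≤ cnt π f := by
  have := pow_dvd_iff_le_cnt hπ hm hf (k := 1)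
  rwa [pow_one] at this

theorem cnt_mul {f g : F[X]} (hf : f ≠ 0) (hg : g ≠ 0) :
    cnt π (f * g) = cnt π f + cnt π g := by
  classical
  simp only [cnt, normalizedFactors_mul hf hg, Multiset.count_add]

theorem cnt_self : cnt π π = 1 := by
  classical
  simp [cnt, normalizedFactors_irreducible hπ, hm.normalize_eq_self]

theorem cnt_one : cnt π (1 : F[X]) = 0 := by
  classical
  simp [cnt]

theorem cnt_C {a : F} (ha : a ≠ 0) : cnt π (C a) = 0 := by
  by_contra h
  have h1 : π ∣ C a := (dvd_iff_one_le_cnt hπ hm (by simp [ha])).2 (by omega)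
  have := degree_le_of_dvd h1 (by simp [ha])
  simp only [degree_C ha] at this
  exact absurd (le_antisymm this (zero_le_degree_iff.mpr hπ.ne_zero)) (by
    intro hdeg
    exact hπ.not_isUnit (isUnit_iff_degree_eq_zero.mpr hdeg))


/-- `π`-adic valuation on `RatFunc F`. -/
def vv (π : F[X]) (x : RatFunc F) : ℤ := (cnt π x.num : ℤ) - (cnt π x.denom : ℤ)

theorem vv_eq {x : RatFunc F} (hx : x ≠ 0) {a b : F[X]} (ha : a ≠ 0) (hb : b ≠ 0)
    (h : algebraMap F[X] (RatFunc F) a = x * algebraMap F[X] (RatFunc F) b) :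
    vv π x = (cnt π a : ℤ) - (cnt π b : ℤ) := by
  have hnum : x.num ≠ 0 := RatFunc.num_ne_zero hx
  have hden : x.denom ≠ 0 := x.denom_ne_zero
  have hx' : x * algebraMap F[X] (RatFunc F) x.denom = algebraMap F[X] (RatFunc F) x.num := by
    have h0 : (algebraMap F[X] (RatFunc F)) x.denom ≠ 0 :=
      (map_ne_zero_iff _ (RatFunc.algebraMap_injective F)).2 hden
    have := (div_eq_iff h0).mp (RatFunc.num_div_denom x)
    rw [this, mul_comm]
  have key : a * x.denom = x.num * b := by
    apply RatFunc.algebraMap_injective F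
    rw [map_mul, map_mul, h, mul_assoc, mul_comm (algebraMap F[X] (RatFunc F) b), ← mul_assoc, hx']
  have := congrArg (cnt π) key
  rw [cnt_mul hπ hm ha hden, cnt_mul hπ hm hnum hb] at this
  unfold vv
  omega

end Stmt16Aux

namespace Stmt16Aux

section NoDec
variable {F : Type*} [Field F]

theorem num_rep (x : RatFunc F) :
    algebraMap F[X] (RatFunc F) x.num = x * algebraMap F[X] (RatFunc F) x.denom := by
  have h0 : (algebraMap F[X] (RatFunc F)) x.denom ≠ 0 :=
    (map_ne_zero_iff _ (RatFunc.algebraMap_injective F)).2 x.denom_ne_zero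
  rw [(div_eq_iff h0).mp (RatFunc.num_div_denom x), mul_comm]

theorem alg_ne_zero {f : F[X]} (hf : f ≠ 0) : algebraMap F[X] (RatFunc F) f ≠ 0 :=
  (map_ne_zero_iff _ (RatFunc.algebraMap_injective F)).2 hf
end NoDec
variable {F : Type*} [Field F] [DecidableEq F]

variable {π : F[X]} (hπ : Irreducible π) (hm : π.Monic)
include hπ hm

theorem vv_poly {f : F[X]} (hf : f ≠ 0) :
    vv π (algebraMap F[X] (RatFunc F) f) = (cnt π f : ℤ) := by
  have := vv_eq hπ hm (x := algebraMap F[X] (RatFunc F) f) (alg_ne_zero hf) hf one_ne_zero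
    (by simp)
  rw [this, cnt_one hπ hm]
  omega

/-- the place attached to a monic irreducible polynomial -/
def place (hπ : Irreducible π) (hm : π.Monic) : FnPlace F (RatFunc F) where
  v := vv π
  v_mul {x y} hx hy := by
    have hrep : algebraMap F[X] (RatFunc F) (x.num * y.num)
        = (x * y) * algebraMap F[X] (RatFunc F) (x.denom * y.denom) := by
      rw [map_mul, map_mul, num_rep x, num_rep y]; ring
    have h1 := vv_eq hπ hm (mul_ne_zero hx hy)
      (mul_ne_zero (RatFunc.num_ne_zero hx) (RatFunc.num_ne_zero hy))
      (mul_ne_zero x.denom_ne_zero y.denom_ne_zero) hrep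
    rw [h1, cnt_mul hπ hm (RatFunc.num_ne_zero hx) (RatFunc.num_ne_zero hy),
      cnt_mul hπ hm x.denom_ne_zero y.denom_ne_zero]
    unfold vv; omega
  v_add {x y} hx hy hxy := by
    have ha : algebraMap F[X] (RatFunc F) (x.num * y.denom + y.num * x.denom)
        = (x + y) * algebraMap F[X] (RatFunc F) (x.denom * y.denom) := by
      rw [map_add, map_mul, map_mul, map_mul, num_rep x, num_rep y]; ring
    have hane : x.num * y.denom + y.num * x.denom ≠ 0 := by
      intro h0
      rw [h0, map_zero] at ha
      exact (mul_ne_zero hxy (alg_ne_zero (mul_ne_zero x.denom_ne_zero y.denom_ne_zero))) ha.symm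
    have h1 := vv_eq hπ hm hxy hane (mul_ne_zero x.denom_ne_zero y.denom_ne_zero) ha
    set k := min (cnt π x.num + cnt π y.denom) (cnt π y.num + cnt π x.denom) with hk
    have hdvd : π ^ k ∣ x.num * y.denom + y.num * x.denom := by
      apply dvd_add
      · exact (pow_dvd_iff_le_cnt hπ hm
          (mul_ne_zero (RatFunc.num_ne_zero hx) y.denom_ne_zero)).2
          (by rw [cnt_mul hπ hm (RatFunc.num_ne_zero hx) y.denom_ne_zero]; omega)
      · exact (pow_dvd_iff_le_cnt hπ hm
          (mul_ne_zero (RatFunc.num_ne_zero hy) x.denom_ne_zero)).2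
          (by rw [cnt_mul hπ hm (RatFunc.num_ne_zero hy) x.denom_ne_zero]; omega)
    have hka : k ≤ cnt π (x.num * y.denom + y.num * x.denom) :=
      (pow_dvd_iff_le_cnt hπ hm hane).1 hdvd
    rw [h1, cnt_mul hπ hm x.denom_ne_zero y.denom_ne_zero]
    show min (vv π x) (vv π y) ≤ _
    unfold vv; omega
  exists_uniformizer := by
    refine ⟨algebraMap F[X] (RatFunc F) π, alg_ne_zero hπ.ne_zero, ?_⟩
    show vv π _ = 1
    rw [vv_poly hπ hm hπ.ne_zero, cnt_self hπ hm]; rfl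
  v_const c hc := by
    show vv π _ = 0
    rw [IsScalarTower.algebraMap_apply F F[X] (RatFunc F), Polynomial.algebraMap_eq,
      vv_poly hπ hm (by simp [hc]), cnt_C hπ hm hc]
    rfl

end Stmt16Aux

namespace Stmt16Aux
section Abstract
variable {F : Type*} [Field F] (w : FnPlace F (RatFunc F))

theorem v_one : w.v 1 = 0 := by
  have := w.v_mul (x := 1) (y := 1) one_ne_zero one_ne_zero
  rw [mul_one] at this; omega

theorem v_pow {x : RatFunc F} (hx : x ≠ 0) (n : ℕ) : w.v (x ^ n) = n * w.v x := by
  induction n with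
  | zero => simpa using v_one w
  | succ n ih =>
    rw [pow_succ, w.v_mul (pow_ne_zero n hx) hx, ih]; push_cast; ring

theorem v_neg {x : RatFunc F} (hx : x ≠ 0) : w.v (-x) = w.v x := by
  have h1 : w.v (-1) = 0 := by
    have := w.v_mul (x := -1) (y := -1) (by simp) (by simp)
    simp only [neg_mul, one_mul, neg_neg] at this
    have h0 := v_one w; omega
  have := w.v_mul (x := -1) (y := x) (by simp) hx
  rw [neg_mul, one_mul] at this; omega

theorem v_sub_comm {x y : RatFunc F} (h : x ≠ y) : w.v (x - y) = w.v (y - x) := by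
  rw [show y - x = -(x - y) by ring, v_neg w (sub_ne_zero.mpr h)]

theorem v_poly_nonneg (hX : w.v RatFunc.X = 0) {f : F[X]} (hf : f ≠ 0) :
    0 ≤ w.v (algebraMap F[X] (RatFunc F) f) := by
  have key : ∀ f : F[X], f = 0 ∨ 0 ≤ w.v (algebraMap F[X] (RatFunc F) f) := by
    intro f
    induction f using Polynomial.induction_on' with
    | monomial n a =>
      by_cases ha : a = 0
      · exact Or.inl (by simp [ha])
      · right
        rw [← Polynomial.C_mul_X_pow_eq_monomial, map_mul, map_pow, RatFunc.algebraMap_X,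
          w.v_mul (alg_ne_zero (by simp [ha])) (pow_ne_zero _ RatFunc.X_ne_zero),
          v_pow w RatFunc.X_ne_zero, hX]
        have : w.v (algebraMap F[X] (RatFunc F) (C a)) = 0 := by
          rw [← Polynomial.algebraMap_eq, ← IsScalarTower.algebraMap_apply F F[X] (RatFunc F)]
          exact w.v_const a ha
        omega
    | add f g hf' hg' =>
      by_cases hf0 : f = 0
      · simpa [hf0] using hg'
      by_cases hg0 : g = 0
      · simpa [hg0] using hf'
      replace hf' := hf'.resolve_left hf0
      replace hg' := hg'.resolve_left hg0
      by_cases hfg : f + g = 0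
      · exact Or.inl hfg
      right
      rw [map_add]
      have := w.v_add (alg_ne_zero hf0) (alg_ne_zero hg0)
        (by rw [← map_add]; exact alg_ne_zero hfg)
      omega
  rcases key f with rfl | h
  · exact absurd rfl hf
  · exact h

end Abstract
end Stmt16Aux

namespace Stmt16Aux
section Abstract2
variable {F : Type*} [Field F] (w : FnPlace F (RatFunc F))

theorem natDegree_pos_of_nonunit {f : F[X]} (hf : f ≠ 0) (hu : ¬IsUnit f) :
    1 ≤ f.natDegree := by
  by_contra h
  push_neg at h
  interval_cases hn : f.natDegree
  · obtain ⟨a, ha⟩ := Polynomial.natDegree_eq_zero.mp hn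
    exact hu (ha ▸ isUnit_C.mpr (Ne.isUnit (by rintro rfl; simp at ha; exact hf ha.symm)))

theorem v_C_eq_zero {a : F} (ha : a ≠ 0) : w.v (algebraMap F[X] (RatFunc F) (C a)) = 0 := by
  rw [← Polynomial.algebraMap_eq, ← IsScalarTower.algebraMap_apply F F[X] (RatFunc F)]
  exact w.v_const a ha

theorem exists_irred_factor (hX : w.v RatFunc.X = 0) :
    ∀ f : F[X], f ≠ 0 → 1 ≤ w.v (algebraMap F[X] (RatFunc F) f) →
      ∃ q : F[X], Irreducible q ∧ 1 ≤ w.v (algebraMap F[X] (RatFunc F) q) := by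
  suffices H : ∀ n, ∀ f : F[X], f.natDegree ≤ n → f ≠ 0 →
      1 ≤ w.v (algebraMap F[X] (RatFunc F) f) →
      ∃ q : F[X], Irreducible q ∧ 1 ≤ w.v (algebraMap F[X] (RatFunc F) q) by
    exact fun f hf h1 => H f.natDegree f le_rfl hf h1
  intro n
  induction n with
  | zero =>
    intro f hdeg hf h1
    obtain ⟨a, ha⟩ := Polynomial.natDegree_eq_zero.mp (Nat.le_zero.mp hdeg)
    have ha0 : a ≠ 0 := by rintro rfl; simp at ha; exact hf ha.symm
    rw [← ha, v_C_eq_zero w ha0] at h1; omega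
  | succ n ih =>
    intro f hdeg hf h1
    by_cases hirr : Irreducible f
    · exact ⟨f, hirr, h1⟩
    by_cases hu : IsUnit f
    · obtain ⟨a, ha0, ha⟩ := Polynomial.isUnit_iff.mp hu
      rw [← ha, v_C_eq_zero w ha0.ne_zero] at h1; omega
    rw [irreducible_iff] at hirr
    push_neg at hirr
    obtain ⟨g, h, hfgh, hgu, hhu⟩ := hirr hu
    have hg0 : g ≠ 0 := by rintro rfl; simp at hfgh; exact hf hfgh
    have hh0 : h ≠ 0 := by rintro rfl; simp at hfgh; exact hf hfgh
    have hgd := natDegree_pos_of_nonunit hg0 hgu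
    have hhd := natDegree_pos_of_nonunit hh0 hhu
    have hsum : g.natDegree + h.natDegree ≤ n + 1 := by
      rw [← Polynomial.natDegree_mul hg0 hh0, ← hfgh]; exact hdeg
    have hv : w.v (algebraMap F[X] (RatFunc F) g) + w.v (algebraMap F[X] (RatFunc F) h)
        = w.v (algebraMap F[X] (RatFunc F) f) := by
      rw [hfgh, map_mul, w.v_mul (alg_ne_zero hg0) (alg_ne_zero hh0)]
    have hgnn := v_poly_nonneg w hX hg0
    have hhnn := v_poly_nonneg w hX hh0
    rcases le_or_gt 1 (w.v (algebraMap F[X] (RatFunc F) g)) with hcase | hcase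
    · exact ih g (by omega) hg0 hcase
    · exact ih h (by omega) hh0 (by omega)

end Abstract2
end Stmt16Aux

namespace Stmt16Aux
section P
variable {p : ℕ} [Fact p.Prime]

theorem irred_dvd {F : Type*} [Field F] [Fintype F] (q : F[X]) (hq : Irreducible q) :
    q ∣ X ^ (Fintype.card F ^ q.natDegree) - X := by
  have : Fact (Irreducible q) := ⟨hq⟩
  have hfd : FiniteDimensional F (AdjoinRoot q) := (AdjoinRoot.powerBasis hq.ne_zero).finite
  have : Finite (AdjoinRoot q) := Module.finite_of_finite F
  have : Fintype (AdjoinRoot q) := Fintype.ofFinite _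
  have hcard : Fintype.card (AdjoinRoot q) = Fintype.card F ^ q.natDegree := by
    rw [Module.card_eq_pow_finrank (K := F), (AdjoinRoot.powerBasis hq.ne_zero).finrank,
      AdjoinRoot.powerBasis_dim]
  have hroot : (AdjoinRoot.root q) ^ (Fintype.card F ^ q.natDegree) = AdjoinRoot.root q := by
    rw [← hcard]; exact FiniteField.pow_card _
  rw [← AdjoinRoot.mk_eq_zero, map_sub, map_pow, AdjoinRoot.mk_X, hroot, sub_self]

instance : CharP (RatFunc (ZMod p)) p :=
  charP_of_injective_algebraMap' (ZMod p) (A := RatFunc (ZMod p)) p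

theorem ratX_pow_inj {a b : ℕ} (h : (RatFunc.X : RatFunc (ZMod p)) ^ a = RatFunc.X ^ b) :
    a = b := by
  have : algebraMap (ZMod p)[X] (RatFunc (ZMod p)) (X ^ a)
      = algebraMap (ZMod p)[X] (RatFunc (ZMod p)) (X ^ b) := by
    rw [map_pow, map_pow, RatFunc.algebraMap_X, h]
  have h2 := RatFunc.algebraMap_injective (ZMod p) this
  have := congrArg Polynomial.natDegree h2
  simpa [Polynomial.natDegree_X_pow] using this

theorem ratX_pow_sub_ne {a b : ℕ} (h : a ≠ b) :
    (RatFunc.X : RatFunc (ZMod p)) ^ a - RatFunc.X ^ b ≠ 0 :=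
  sub_ne_zero.mpr (fun he => h (ratX_pow_inj he))

theorem two_le_ppow {m : ℕ} (hm : 1 ≤ m) : 2 ≤ p ^ m :=
  le_trans (Fact.out (p := p.Prime)).two_le (Nat.le_self_pow (by omega) p)

theorem mapped_Xpow_sub (m : ℕ) :
    algebraMap (ZMod p)[X] (RatFunc (ZMod p)) (X ^ m - X)
      = (RatFunc.X : RatFunc (ZMod p)) ^ m - RatFunc.X := by
  rw [map_sub, map_pow, RatFunc.algebraMap_X]

variable (w : FnPlace (ZMod p) (RatFunc (ZMod p)))

theorem exists_d (hX : w.v RatFunc.X = 0) :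
    ∃ d : ℕ, 1 ≤ d ∧ 1 ≤ w.v ((RatFunc.X : RatFunc (ZMod p)) ^ p ^ d - RatFunc.X) := by
  obtain ⟨s, hs0, hs1⟩ := w.exists_uniformizer
  have hnum : 1 ≤ w.v (algebraMap (ZMod p)[X] (RatFunc (ZMod p)) s.num) := by
    rw [num_rep s, w.v_mul hs0 (alg_ne_zero s.denom_ne_zero), hs1]
    have := v_poly_nonneg w hX s.denom_ne_zero
    omega
  obtain ⟨q, hqirr, hqv⟩ := exists_irred_factor w hX s.num (RatFunc.num_ne_zero hs0) hnum
  refine ⟨q.natDegree, natDegree_pos_of_nonunit hqirr.ne_zero hqirr.not_isUnit, ?_⟩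
  obtain ⟨h, hh⟩ : q ∣ (X : (ZMod p)[X]) ^ p ^ q.natDegree - X := by
    have := irred_dvd q hqirr
    rwa [ZMod.card] at this
  have hfe : (X : (ZMod p)[X]) ^ p ^ q.natDegree - X ≠ 0 := by
    intro h0
    rw [sub_eq_zero] at h0
    have := congrArg Polynomial.natDegree h0
    simp only [Polynomial.natDegree_X_pow, Polynomial.natDegree_X] at this
    have := two_le_ppow (p := p) (natDegree_pos_of_nonunit hqirr.ne_zero hqirr.not_isUnit)
    omega
  have hh0 : h ≠ 0 := by rintro rfl; rw [mul_zero] at hh; exact hfe hh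
  rw [← mapped_Xpow_sub, hh, map_mul, w.v_mul (alg_ne_zero hqirr.ne_zero) (alg_ne_zero hh0)]
  have := v_poly_nonneg w hX hh0
  omega

theorem telescope {d : ℕ} (hd1 : 1 ≤ d)
    (hd : 1 ≤ w.v ((RatFunc.X : RatFunc (ZMod p)) ^ p ^ d - RatFunc.X)) :
    ∀ k : ℕ, 1 ≤ k → 1 ≤ w.v ((RatFunc.X : RatFunc (ZMod p)) ^ p ^ (d * k) - RatFunc.X) := by
  intro k
  induction k with
  | zero => omega
  | succ k ih =>
    intro _
    by_cases hk : k = 0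
    · subst hk; simpa using hd
    have hk1 : 1 ≤ k := by omega
    have hA : (RatFunc.X : RatFunc (ZMod p)) ^ p ^ (d * k) - RatFunc.X ≠ 0 := by
      have : p ^ (d * k) ≠ 1 := by
        have := two_le_ppow (p := p) (Nat.mul_pos hd1 hk1); omega
      simpa using ratX_pow_sub_ne (a := p ^ (d*k)) (b := 1) this
    have hiden : ((RatFunc.X : RatFunc (ZMod p)) ^ p ^ (d * k) - RatFunc.X) ^ p ^ d
        + ((RatFunc.X : RatFunc (ZMod p)) ^ p ^ d - RatFunc.X)
        = (RatFunc.X : RatFunc (ZMod p)) ^ p ^ (d * (k+1)) - RatFunc.X := by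
      rw [sub_pow_char_pow, ← pow_mul, ← pow_add]
      rw [show d * k + d = d * (k + 1) by ring]
      ring
    have hsumne : (RatFunc.X : RatFunc (ZMod p)) ^ p ^ (d * (k+1)) - RatFunc.X ≠ 0 := by
      have : p ^ (d * (k+1)) ≠ 1 := by
        have hpos : 1 ≤ d * (k+1) :=
          Nat.one_le_iff_ne_zero.mpr (Nat.mul_ne_zero (by omega) k.succ_ne_zero)
        have := two_le_ppow (p := p) hpos; omega
      simpa using ratX_pow_sub_ne (a := p ^ (d*(k+1))) (b := 1) this
    have hBne : (RatFunc.X : RatFunc (ZMod p)) ^ p ^ d - RatFunc.X ≠ 0 := by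
      have : p ^ d ≠ 1 := by have := two_le_ppow (p := p) hd1; omega
      simpa using ratX_pow_sub_ne (a := p ^ d) (b := 1) this
    have hv := w.v_add (pow_ne_zero _ hA) hBne (by rw [hiden]; exact hsumne)
    rw [hiden] at hv
    rw [v_pow w hA] at hv
    have ha := ih hk1
    have hc : (1:ℤ) ≤ (p ^ d : ℤ) := by
      have : 1 ≤ p ^ d := Nat.one_le_pow d p (Fact.out (p := p.Prime)).pos
      exact_mod_cast this
    have h1 : (1:ℤ) ≤ min ((p ^ d : ℤ) * w.v ((RatFunc.X : RatFunc (ZMod p)) ^ p ^ (d * k) - RatFunc.X)) (w.v ((RatFunc.X : RatFunc (ZMod p)) ^ p ^ d - RatFunc.X)) := by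
      apply le_min _ hd
      nlinarith
    push_cast at hv
    linarith

end P
end Stmt16Aux

namespace Stmt16Aux
section PartA
variable {p : ℕ} [Fact p.Prime] (w : FnPlace (ZMod p) (RatFunc (ZMod p)))

theorem ppow_lt_ppow {a b : ℕ} (h : a < b) : p ^ a < p ^ b :=
  Nat.pow_lt_pow_right (Fact.out (p := p.Prime)).one_lt h

theorem partA_core {d : ℕ} (hd1 : 1 ≤ d)
    (hd : 1 ≤ w.v ((RatFunc.X : RatFunc (ZMod p)) ^ p ^ d - RatFunc.X))
    {n : ℤ} {i i' : ℕ} (hdi : d ≤ i) (h1i : 1 ≤ i) (hni : n.toNat ≤ i) (hii' : i < i') :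
    n ≤ w.v ((RatFunc.X : RatFunc (ZMod p)) ^ p ^ i'.factorial
      - RatFunc.X ^ p ^ i.factorial) := by
  set m := i'.factorial - i.factorial with hm
  have hfact_lt : i.factorial < i'.factorial := (Nat.factorial_lt (by omega)).2 hii'
  have hdvd : d ∣ i.factorial := Nat.dvd_factorial (by omega) hdi
  have hdvd' : d ∣ i'.factorial := Nat.dvd_factorial (by omega) (by omega)
  obtain ⟨k, hk⟩ : d ∣ m := Nat.dvd_sub hdvd' hdvd
  have hk1 : 1 ≤ k := by
    rcases Nat.eq_zero_or_pos k with rfl | h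
    · omega
    · exact h
  have h1 := telescope w hd1 hd k hk1
  rw [← hk] at h1
  have hAne : (RatFunc.X : RatFunc (ZMod p)) ^ p ^ m - RatFunc.X ≠ 0 := by
    have : p ^ m ≠ 1 := by
      have := two_le_ppow (p := p) (show 1 ≤ m by omega); omega
    simpa using ratX_pow_sub_ne (a := p ^ m) (b := 1) this
  have hiden : ((RatFunc.X : RatFunc (ZMod p)) ^ p ^ m - RatFunc.X) ^ p ^ i.factorial
      = (RatFunc.X : RatFunc (ZMod p)) ^ p ^ i'.factorial - RatFunc.X ^ p ^ i.factorial := by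
    rw [sub_pow_char_pow, ← pow_mul, ← pow_add,
      show m + i.factorial = i'.factorial by omega]
  rw [← hiden, v_pow w hAne]
  have hni' : (n : ℤ) ≤ (p ^ i.factorial : ℕ) := by
    have l1 : i ≤ i.factorial := Nat.self_le_factorial i
    have l2 : i.factorial < 2 ^ i.factorial := Nat.lt_two_pow_self
    have l3 : 2 ^ i.factorial ≤ p ^ i.factorial :=
      Nat.pow_le_pow_left (Fact.out (p := p.Prime)).two_le _
    have l4 : n ≤ (n.toNat : ℤ) := Int.self_le_toNat n
    have : n.toNat ≤ p ^ i.factorial := by omega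
    omega
  have hpow1 : (1:ℤ) ≤ (p ^ i.factorial : ℕ) := by
    have : 1 ≤ p ^ i.factorial := Nat.one_le_pow _ _ (Fact.out (p := p.Prime)).pos
    exact_mod_cast this
  calc (n:ℤ) ≤ (p ^ i.factorial : ℕ) := hni'
    _ = (p ^ i.factorial : ℕ) * 1 := (mul_one _).symm
    _ ≤ (p ^ i.factorial : ℕ) * w.v ((RatFunc.X : RatFunc (ZMod p)) ^ p ^ m - RatFunc.X) := by
        apply mul_le_mul_of_nonneg_left h1 (by omega)
    _ = _ := by push_cast; ring

theorem partA (hX : w.v RatFunc.X = 0) (n : ℤ) :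
    ∃ N : ℕ, ∀ i i' : ℕ, N ≤ i → N ≤ i' →
      ((RatFunc.X : RatFunc (ZMod p)) ^ p ^ i.factorial = RatFunc.X ^ p ^ i'.factorial ∨
        n ≤ w.v ((RatFunc.X : RatFunc (ZMod p)) ^ p ^ i.factorial
          - RatFunc.X ^ p ^ i'.factorial)) := by
  obtain ⟨d, hd1, hd⟩ := exists_d w hX
  refine ⟨max (max d 1) n.toNat, fun i i' hi hi' => ?_⟩
  rcases lt_trichotomy i i' with h | rfl | h
  · right
    have hne : (RatFunc.X : RatFunc (ZMod p)) ^ p ^ i.factorial ≠ RatFunc.X ^ p ^ i'.factorial := by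
      intro he
      have := ratX_pow_inj he
      have := ppow_lt_ppow (p := p) ((Nat.factorial_lt (by omega)).2 h)
      omega
    rw [v_sub_comm w hne]
    exact partA_core w hd1 hd (by omega) (by omega) (by omega) h
  · left; rfl
  · right
    exact partA_core w hd1 hd (by omega) (by omega) (by omega) h

end PartA
end Stmt16Aux

namespace Stmt16Aux
section PartB
variable {p : ℕ} [Fact p.Prime]

theorem MI_infinite : {q : (ZMod p)[X] | q.Monic ∧ Irreducible q}.Infinite := by
  intro hfin
  set T := hfin.toFinset with hT
  have hXT : (X : (ZMod p)[X]) ∈ T := by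
    rw [hT, Set.Finite.mem_toFinset]; exact ⟨monic_X, irreducible_X⟩
  set g : (ZMod p)[X] := (∏ q ∈ T, q) + 1 with hg
  have hprod_ne : ∀ q ∈ T, q ≠ (0 : (ZMod p)[X]) := by
    intro q hq
    rw [hT, Set.Finite.mem_toFinset] at hq
    exact hq.2.ne_zero
  have hdeg : 1 ≤ (∏ q ∈ T, q).natDegree := by
    rw [Polynomial.natDegree_prod _ _ hprod_ne]
    calc 1 = (X : (ZMod p)[X]).natDegree := (Polynomial.natDegree_X).symm
      _ ≤ ∑ q ∈ T, q.natDegree := Finset.single_le_sum (fun q hq => Nat.zero_le _) hXT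
  have hgdeg : 1 ≤ g.natDegree := by
    rw [hg, show (1 : (ZMod p)[X]) = C 1 from (Polynomial.C_1).symm, Polynomial.natDegree_add_C]
    exact hdeg
  have hgu : ¬IsUnit g := by
    intro hu
    rw [Polynomial.isUnit_iff_degree_eq_zero] at hu
    rw [Polynomial.natDegree, hu] at hgdeg
    simp at hgdeg
  obtain ⟨q, hqm, hqi, hqdvd⟩ := Polynomial.exists_monic_irreducible_factor g hgu
  have hqT : q ∈ T := by rw [hT, Set.Finite.mem_toFinset]; exact ⟨hqm, hqi⟩
  have h1 : q ∣ ∏ r ∈ T, r := Finset.dvd_prod_of_mem _ hqT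
  have : q ∣ 1 := by
    have := dvd_sub hqdvd h1
    simpa [hg] using this
  exact hqi.not_isUnit (isUnit_of_dvd_one this)

open scoped Classical in
/-- total function: the place attached to a polynomial -/
def place' (π : (ZMod p)[X]) : FnPlace (ZMod p) (RatFunc (ZMod p)) :=
  if h : π.Monic ∧ Irreducible π then place h.2 h.1
  else place (irreducible_X (R := ZMod p)) monic_X

theorem place'_v {π : (ZMod p)[X]} (h : π.Monic ∧ Irreducible π) :
    (place' π).v = vv π := by
  classical
  rw [place', dif_pos h]
  rfl

theorem cnt_other {π π' : (ZMod p)[X]} (h : π.Monic ∧ Irreducible π)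
    (h' : π'.Monic ∧ Irreducible π') (hne : π ≠ π') : cnt π π' = 0 := by
  by_contra hc
  have hdvd : π ∣ π' := (dvd_iff_one_le_cnt h.2 h.1 h'.2.ne_zero).2 (by omega)
  exact hne (Polynomial.eq_of_monic_of_associated h.1 h'.1
    (h.2.associated_of_dvd h'.2 hdvd))

theorem place'_injOn :
    Set.InjOn (place' (p := p)) {q : (ZMod p)[X] | q.Monic ∧ Irreducible q} := by
  intro a ha b hb hab
  by_contra hne
  have h1 : (place' a).v (algebraMap (ZMod p)[X] (RatFunc (ZMod p)) a) = 1 := by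
    rw [place'_v ha, vv_poly ha.2 ha.1 ha.2.ne_zero, cnt_self ha.2 ha.1]; rfl
  have h2 : (place' b).v (algebraMap (ZMod p)[X] (RatFunc (ZMod p)) a) = 0 := by
    rw [place'_v hb, vv_poly hb.2 hb.1 ha.2.ne_zero, cnt_other hb ha (Ne.symm hne)]; rfl
  rw [hab, h2] at h1
  exact one_ne_zero h1.symm

end PartB
end Stmt16Aux

namespace Stmt16Aux
section PartB2
variable {p : ℕ} [Fact p.Prime]

theorem poly_Xpow_sub_ne {m : ℕ} (hm : 2 ≤ m) : ((X : (ZMod p)[X]) ^ m - X) ≠ 0 := by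
  intro h0
  rw [sub_eq_zero] at h0
  have := congrArg Polynomial.natDegree h0
  simp only [Polynomial.natDegree_X_pow, Polynomial.natDegree_X] at this
  omega

theorem sqfree {m : ℕ} (hm : 1 ≤ m) : Squarefree ((X : (ZMod p)[X]) ^ p ^ m - X) := by
  apply Polynomial.Separable.squarefree
  have hder : Polynomial.derivative ((X : (ZMod p)[X]) ^ p ^ m - X) = -1 := by
    rw [map_sub, Polynomial.derivative_X_pow, Polynomial.derivative_X]
    have h0 : ((p ^ m : ℕ) : ZMod p) = 0 := by
      rw [Nat.cast_pow, ZMod.natCast_self, zero_pow (by omega)]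
    rw [h0]
    simp
  rw [Polynomial.separable_def, hder]
  exact (isCoprime_one_right).neg_right

theorem vv_ge_one_Xpow {q : (ZMod p)[X]} (hq : q.Monic ∧ Irreducible q) {i : ℕ}
    (hdi : q.natDegree ≤ i) (h1i : 1 ≤ i) :
    1 ≤ vv q ((RatFunc.X : RatFunc (ZMod p)) ^ p ^ i.factorial - RatFunc.X) := by
  set d := q.natDegree with hd
  have hd1 : 1 ≤ d := natDegree_pos_of_nonunit hq.2.ne_zero hq.2.not_isUnit
  have hbase : 1 ≤ vv q ((RatFunc.X : RatFunc (ZMod p)) ^ p ^ d - RatFunc.X) := by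
    have hdvd : q ∣ (X : (ZMod p)[X]) ^ p ^ d - X := by
      have := irred_dvd q hq.2
      rwa [ZMod.card] at this
    have hne : ((X : (ZMod p)[X]) ^ p ^ d - X) ≠ 0 :=
      poly_Xpow_sub_ne (two_le_ppow (p := p) hd1)
    rw [← mapped_Xpow_sub, vv_poly hq.2 hq.1 hne]
    have := (dvd_iff_one_le_cnt hq.2 hq.1 hne).1 hdvd
    omega
  obtain ⟨k, hk⟩ : d ∣ i.factorial := Nat.dvd_factorial (by omega) hdi
  have hk1 : 1 ≤ k := by
    rcases Nat.eq_zero_or_pos k with rfl | h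
    · exfalso; rw [mul_zero] at hk; exact Nat.factorial_ne_zero i hk
    · exact h
  have := telescope (place hq.2 hq.1) hd1 hbase k hk1
  rwa [← hk] at this

theorem partB (Ω : Set (FnPlace (ZMod p) (RatFunc (ZMod p)))) (hΩcofin : Ωᶜ.Finite) :
    ¬ ∃ x : RatFunc (ZMod p), x ≠ 0 ∧ ∀ w ∈ Ω, ∀ n : ℤ, ∃ N : ℕ, ∀ i ≥ N,
      ((RatFunc.X : RatFunc (ZMod p)) ^ p ^ i.factorial = x ∨
        n ≤ w.v ((RatFunc.X : RatFunc (ZMod p)) ^ p ^ i.factorial - x)) := by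
  classical
  rintro ⟨x, hx0, hconv⟩
  have hMI := MI_infinite (p := p)
  set S := {q : (ZMod p)[X] | (q.Monic ∧ Irreducible q) ∧ place' q ∈ Ω} with hS
  have hSinf : S.Infinite := by
    have hfin2 : ({q : (ZMod p)[X] | q.Monic ∧ Irreducible q} ∩ place' ⁻¹' Ωᶜ).Finite := by
      apply Set.Finite.of_finite_image _ (place'_injOn.mono Set.inter_subset_left)
      exact hΩcofin.subset (by rintro y ⟨q, ⟨hqMI, hqΩ⟩, rfl⟩; exact hqΩ)
    have hSeq : S = {q : (ZMod p)[X] | q.Monic ∧ Irreducible q}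
        \ ({q : (ZMod p)[X] | q.Monic ∧ Irreducible q} ∩ place' ⁻¹' Ωᶜ) := by
      ext q
      simp only [hS, Set.mem_setOf_eq, Set.mem_diff, Set.mem_inter_iff, Set.mem_preimage,
        Set.mem_compl_iff]
      tauto
    rw [hSeq]
    exact hMI.diff hfin2
  by_cases hxX : x = RatFunc.X
  · -- squarefree contradiction
    obtain ⟨q, hqS⟩ := hSinf.nonempty
    obtain ⟨hq, hw⟩ := hqS
    obtain ⟨N, hN⟩ := hconv (place' q) hw 2
    set i := max N 1 with hi
    have hfac1 : 1 ≤ i.factorial := Nat.one_le_iff_ne_zero.mpr (Nat.factorial_ne_zero i)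
    have hne : (RatFunc.X : RatFunc (ZMod p)) ^ p ^ i.factorial ≠ x := by
      rw [hxX]
      intro h
      have h2 : (RatFunc.X : RatFunc (ZMod p)) ^ p ^ i.factorial = RatFunc.X ^ 1 := by
        rwa [pow_one]
      have := ratX_pow_inj h2
      have := two_le_ppow (p := p) hfac1
      omega
    have h2 := (hN i (le_max_left _ _)).resolve_left hne
    rw [hxX, place'_v hq] at h2
    have hpne : ((X : (ZMod p)[X]) ^ p ^ i.factorial - X) ≠ 0 :=
      poly_Xpow_sub_ne (two_le_ppow (p := p) hfac1)
    rw [← mapped_Xpow_sub, vv_poly hq.2 hq.1 hpne] at h2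
    have hcnt : 2 ≤ cnt q ((X : (ZMod p)[X]) ^ p ^ i.factorial - X) := by exact_mod_cast h2
    have hdvd : q * q ∣ (X : (ZMod p)[X]) ^ p ^ i.factorial - X := by
      have := (pow_dvd_iff_le_cnt hq.2 hq.1 hpne (k := 2)).2 hcnt
      rwa [pow_two] at this
    exact hq.2.not_isUnit (sqfree hfac1 q hdvd)
  · -- x ≠ X : every q ∈ S divides (x - X).num
    have hy0 : x - RatFunc.X ≠ 0 := sub_ne_zero.mpr hxX
    have ha0 : (x - RatFunc.X).num ≠ 0 := RatFunc.num_ne_zero hy0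
    have key : S ⊆ {r | r ∈ normalizedFactors (x - RatFunc.X).num} := by
      rintro q ⟨hq, hw⟩
      obtain ⟨N, hN⟩ := hconv (place' q) hw 1
      set M := max (max N q.natDegree) 1 with hM
      have hM1 : 1 ≤ M := le_max_right _ _
      -- choose i ∈ {M, M+1} avoiding the equality case
      obtain ⟨i, hiN, hid, hi1, hine⟩ :
          ∃ i : ℕ, N ≤ i ∧ q.natDegree ≤ i ∧ 1 ≤ i ∧
            (RatFunc.X : RatFunc (ZMod p)) ^ p ^ i.factorial ≠ x := by
        by_cases hb : (RatFunc.X : RatFunc (ZMod p)) ^ p ^ M.factorial = x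
        · refine ⟨M + 1, by omega, by omega, by omega, fun hb' => ?_⟩
          have heq : (RatFunc.X : RatFunc (ZMod p)) ^ p ^ M.factorial
              = RatFunc.X ^ p ^ (M+1).factorial := by rw [hb, hb']
          have h3 := ratX_pow_inj heq
          have h4 := ppow_lt_ppow (p := p) ((Nat.factorial_lt (by omega)).2 (by omega : M < M + 1))
          omega
        · exact ⟨M, by omega, by omega, by omega, hb⟩
      have h1 := (hN i hiN).resolve_left hine
      rw [place'_v hq] at h1
      have h2 := vv_ge_one_Xpow hq hid hi1
      -- combine via the place's v_add
      set w' := place hq.2 hq.1 with hw'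
      have hA : (RatFunc.X : RatFunc (ZMod p)) ^ p ^ i.factorial - RatFunc.X ≠ 0 := by
        have hfac1 : 1 ≤ i.factorial := Nat.one_le_iff_ne_zero.mpr (Nat.factorial_ne_zero i)
        have : p ^ i.factorial ≠ 1 := by have := two_le_ppow (p := p) hfac1; omega
        simpa using ratX_pow_sub_ne (a := p ^ i.factorial) (b := 1) this
      have hB : (RatFunc.X : RatFunc (ZMod p)) ^ p ^ i.factorial - x ≠ 0 := sub_ne_zero.mpr hine
      have hsum : ((RatFunc.X : RatFunc (ZMod p)) ^ p ^ i.factorial - RatFunc.X)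
          + -((RatFunc.X : RatFunc (ZMod p)) ^ p ^ i.factorial - x) = x - RatFunc.X := by ring
      have hva := w'.v_add hA (neg_ne_zero.mpr hB) (by rw [hsum]; exact hy0)
      rw [hsum] at hva
      have hvneg : w'.v (-((RatFunc.X : RatFunc (ZMod p)) ^ p ^ i.factorial - x))
          = w'.v ((RatFunc.X : RatFunc (ZMod p)) ^ p ^ i.factorial - x) := v_neg w' hB
      have hvy : 1 ≤ vv q (x - RatFunc.X) := by
        have hwA : w'.v ((RatFunc.X : RatFunc (ZMod p)) ^ p ^ i.factorial - RatFunc.X)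
            = vv q ((RatFunc.X : RatFunc (ZMod p)) ^ p ^ i.factorial - RatFunc.X) := rfl
        have hwB : w'.v ((RatFunc.X : RatFunc (ZMod p)) ^ p ^ i.factorial - x)
            = vv q ((RatFunc.X : RatFunc (ZMod p)) ^ p ^ i.factorial - x) := rfl
        have hwy : w'.v (x - RatFunc.X) = vv q (x - RatFunc.X) := rfl
        rw [hvneg, hwA, hwB, hwy] at hva
        have := le_min h2 h1
        omega
    -- hence q ∣ num
      have hcnt1 : 1 ≤ cnt q (x - RatFunc.X).num := by
        have : vv q (x - RatFunc.X)
            = (cnt q (x - RatFunc.X).num : ℤ) - (cnt q (x - RatFunc.X).denom : ℤ) := rfl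
        omega
      have hpos : 0 < Multiset.count q (normalizedFactors (x - RatFunc.X).num) := by
        have : cnt q (x - RatFunc.X).num
            = Multiset.count q (normalizedFactors (x - RatFunc.X).num) := rfl
        omega
      have hmem : q ∈ normalizedFactors (x - RatFunc.X).num := Multiset.count_pos.mp hpos
      exact hmem
    exact (Multiset.finite_toSet _).not_infinite (hSinf.mono key)

end PartB2
end Stmt16Aux

end

/-- Example `x_plus_y` of the paper.  `K = 𝔽_p(t)` (with `t = X`),
`Γ = ⟨t, −t, 1−t⟩ ⊆ K*`, and `Ω` a cofinite set of places of `K/𝔽_p` at which `t` and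
`1 − t` (hence also `−t`) are units.  Then, with respect to the product topology of
`∏_{v ∈ Ω} K_v*`:  (a) the sequence `(t^{p^{n!}})_n` is Cauchy at every `v ∈ Ω`, so it
converges to an element `α` of the closure `Γ̄` of `Γ`;  (b) it does not converge at all
`v ∈ Ω` to a single element of `K*`, i.e. `α ∉ K*`;  consequently (c) `(α, −α)` satisfies
`X₁ + X₂ = 0` with coordinates in `Γ̄`, but it is not a solution with both coordinates in
`Γ`: there is no `(x, y) ∈ Γ × Γ` with `x + y = 0` and `x = α`. -/
theorem stmt16 (p : ℕ) [Fact p.Prime]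
    (Γ : Subgroup (RatFunc (ZMod p))ˣ)
    (hΓ : Γ = Subgroup.closure
      {u : (RatFunc (ZMod p))ˣ |
        (u : RatFunc (ZMod p)) = RatFunc.X ∨
        (u : RatFunc (ZMod p)) = -RatFunc.X ∨
        (u : RatFunc (ZMod p)) = 1 - RatFunc.X})
    (Ω : Set (FnPlace (ZMod p) (RatFunc (ZMod p))))
    (hΩcofin : Ωᶜ.Finite)
    (hΩunits : ∀ w ∈ Ω, w.v (RatFunc.X : RatFunc (ZMod p)) = 0 ∧
      w.v (1 - RatFunc.X : RatFunc (ZMod p)) = 0) :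
    (∀ w ∈ Ω, ∀ n : ℤ, ∃ N : ℕ, ∀ i i' : ℕ, N ≤ i → N ≤ i' →
      ((RatFunc.X : RatFunc (ZMod p)) ^ p ^ (Nat.factorial i) = RatFunc.X ^ p ^ (Nat.factorial i') ∨
        n ≤ w.v ((RatFunc.X : RatFunc (ZMod p)) ^ p ^ (Nat.factorial i) - RatFunc.X ^ p ^ (Nat.factorial i')))) ∧
    (¬ ∃ x : RatFunc (ZMod p), x ≠ 0 ∧ ∀ w ∈ Ω, ∀ n : ℤ, ∃ N : ℕ, ∀ i ≥ N,
      ((RatFunc.X : RatFunc (ZMod p)) ^ p ^ (Nat.factorial i) = x ∨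
        n ≤ w.v ((RatFunc.X : RatFunc (ZMod p)) ^ p ^ (Nat.factorial i) - x))) ∧
    (¬ ∃ x y : (RatFunc (ZMod p))ˣ, x ∈ Γ ∧ y ∈ Γ ∧
      (x : RatFunc (ZMod p)) + (y : RatFunc (ZMod p)) = 0 ∧
      (∀ w ∈ Ω, ∀ n : ℤ, ∃ N : ℕ, ∀ i ≥ N,
        ((RatFunc.X : RatFunc (ZMod p)) ^ p ^ (Nat.factorial i) = (x : RatFunc (ZMod p)) ∨
          n ≤ w.v ((RatFunc.X : RatFunc (ZMod p)) ^ p ^ (Nat.factorial i) - (x : RatFunc (ZMod p)))))) := by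
  refine ⟨?_, ?_, ?_⟩
  · intro w hw n
    exact Stmt16Aux.partA w (hΩunits w hw).1 n
  · exact Stmt16Aux.partB Ω hΩcofin
  · rintro ⟨x, y, hxΓ, hyΓ, hxy, hcv⟩
    exact Stmt16Aux.partB Ω hΩcofin ⟨(x : RatFunc (ZMod p)), Units.ne_zero x, hcv⟩
end
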